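/- Let S1, m, u be rational numbers with S1 ≠ 0, 3m^2+1 ≠ 0 and (m+1)u^2 − m + 1 ≠ 0, and define h = −2S1^2·u·((m+1)(m^2+1)u − m(m^2+3)) / ((3m^2+1)((m+1)u^2 − m + 1)). Then the quantity (m^2−1)(3m^2+1)^2·h^2 + 2S1^2(m^4−1)(3m^2+1)·h + S1^4·m^2(m^2+3)^2 is the square of a rational number. -/

import Mathlib

theorem stmt_8 (S₁ m u h : ℚ) (hS₁ : S₁ ≠ 0) (hm : 3 * m ^ 2 + 1 ≠ 0)
    (hu : (m + 1) * u ^ 2 - m + 1 ≠ 0)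
    (hh : h = -2 * S₁ ^ 2 * u * ((m + 1) * (m ^ 2 + 1) * u - m * (m ^ 2 + 3)) /
      ((3 * m ^ 2 + 1) * ((m + 1) * u ^ 2 - m + 1))) :
    ∃ r : ℚ, (m ^ 2 - 1) * (3 * m ^ 2 + 1) ^ 2 * h ^ 2 +
        2 * S₁ ^ 2 * (m ^ 4 - 1) * (3 * m ^ 2 + 1) * h +
        S₁ ^ 4 * m ^ 2 * (m ^ 2 + 3) ^ 2 = r ^ 2 := by
  refine ⟨S₁ ^ 2 * ((3*m + 3*m^2 + 10*m^3 + 10*m^4 + 3*m^5 + 3*m^6) * u^2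
      + (2 + 6*m^2 - 2*m^4 - 6*m^6) * u
      + (-3*m + 3*m^2 - 10*m^3 + 10*m^4 - 3*m^5 + 3*m^6)) /
      ((3 * m ^ 2 + 1) * ((m + 1) * u ^ 2 - m + 1)), ?_⟩
  subst hh
  field_simp
  have hu' : u ^ 2 * (m + 1) - m + 1 ≠ 0 := by rwa [mul_comm] at hu
  field_simp
  ring
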